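/- With S = ℂ[α_0, α_1, β_0, β_1] bigraded as for F_1 and F = x_0 x_1 y_0 y_1 of degree (3,2), the ideal I = (α_0² − α_1², β_0² − α_1²β_1²) is contained in F^⊥, and the subscheme of F_1 it defines is the reduced union of the four points [1,1;1,1], [1,1;1,−1], [1,−1;1,1], [1,−1;1,−1]. -/

import Mathlib

open MvPolynomial

/-- Contraction action: on monomials, `x^a ∘ y^b = y^(b-a)` if `a ≤ b`, else `0`. -/
noncomputable def contract {σ : Type*} (g F : MvPolynomial σ ℂ) : MvPolynomial σ ℂ :=
  ∑ a ∈ g.support, ∑ b ∈ F.support,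
    if a ≤ b then monomial (b - a) (g.coeff a * F.coeff b) else 0

/-- On the Hirzebruch surface `F₁` with Cox coordinates `(α₀, α₁, β₀, β₁)`
(variables `X 0, X 1, X 2, X 3`), the ideal `I = (α₀² − α₁², β₀² − α₁²β₁²)` is contained
in the apolar ideal of `F = x₀x₁y₀y₁`, and its zero locus in `ℂ⁴` is the union of the
torus orbits (cones) of the four points `[1,±1;1,±1]`, i.e. it defines the reduced union
of those four points of `F₁`. -/
theorem stmt9 :
    (∀ g ∈ Ideal.span {(X 0 : MvPolynomial (Fin 4) ℂ) ^ 2 - X 1 ^ 2,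
        X 2 ^ 2 - X 1 ^ 2 * X 3 ^ 2},
      contract g (X 0 * X 1 * X 2 * X 3) = 0) ∧
    {p : Fin 4 → ℂ |
        eval p ((X 0 : MvPolynomial (Fin 4) ℂ) ^ 2 - X 1 ^ 2) = 0 ∧
        eval p ((X 2 : MvPolynomial (Fin 4) ℂ) ^ 2 - X 1 ^ 2 * X 3 ^ 2) = 0} =
      {p : Fin 4 → ℂ | ∃ t s ε₁ ε₂ : ℂ, (ε₁ = 1 ∨ ε₁ = -1) ∧ (ε₂ = 1 ∨ ε₂ = -1) ∧
        p = ![t, ε₁ * t, t * s, ε₂ * s]} := by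
  constructor
  · intro g hg
    set u : Fin 4 →₀ ℕ := Finsupp.single 0 1 + Finsupp.single 1 1 + Finsupp.single 2 1
        + Finsupp.single 3 1 with hu
    have hF : (X 0 * X 1 * X 2 * X 3 : MvPolynomial (Fin 4) ℂ) = monomial u 1 := by
      rw [hu]
      simp [X, monomial_mul]
    have hu0 : u 0 = 1 := by simp [hu, Finsupp.single_apply]
    have hu1 : u 1 = 1 := by simp [hu, Finsupp.single_apply]
    have hu2 : u 2 = 1 := by simp [hu, Finsupp.single_apply]
    have key : ∀ a : Fin 4 →₀ ℕ, a ≤ u → coeff a g = 0 := by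
      induction hg using Submodule.span_induction with
      | mem x hx =>
        intro a ha
        have ha0 : a 0 ≤ 1 := by rw [← hu0]; exact ha 0
        have ha1 : a 1 ≤ 1 := by rw [← hu1]; exact ha 1
        have ha2 : a 2 ≤ 1 := by rw [← hu2]; exact ha 2
        rcases hx with rfl | rfl
        · have e0 : (X 0 : MvPolynomial (Fin 4) ℂ) ^ 2 = monomial (Finsupp.single 0 2) 1 := by
            simp [X_pow_eq_monomial]
          have e1 : (X 1 : MvPolynomial (Fin 4) ℂ) ^ 2 = monomial (Finsupp.single 1 2) 1 := by
            simp [X_pow_eq_monomial]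
          rw [coeff_sub, e0, e1, coeff_monomial, coeff_monomial, if_neg, if_neg, sub_zero]
          · intro h
            have : a 1 = 2 := by rw [← h]; simp
            omega
          · intro h
            have : a 0 = 2 := by rw [← h]; simp
            omega
        · have e0 : (X 2 : MvPolynomial (Fin 4) ℂ) ^ 2 = monomial (Finsupp.single 2 2) 1 := by
            simp [X_pow_eq_monomial]
          have e1 : (X 1 : MvPolynomial (Fin 4) ℂ) ^ 2 * X 3 ^ 2
              = monomial (Finsupp.single 1 2 + Finsupp.single 3 2) 1 := by
            simp [X_pow_eq_monomial, monomial_mul]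
          rw [coeff_sub, e0, e1, coeff_monomial, coeff_monomial, if_neg, if_neg, sub_zero]
          · intro h
            have : a 1 = 2 := by rw [← h]; simp [Finsupp.single_apply]
            omega
          · intro h
            have : a 2 = 2 := by rw [← h]; simp
            omega
      | zero => intro a ha; simp
      | add x y hx hy ihx ihy =>
        intro a ha
        rw [coeff_add, ihx a ha, ihy a ha, add_zero]
      | smul r x hx ih =>
        intro a ha
        rw [smul_eq_mul, coeff_mul]
        refine Finset.sum_eq_zero fun z hz => ?_
        rw [Finset.HasAntidiagonal.mem_antidiagonal] at hz
        have : z.2 ≤ a := by rw [← hz]; exact le_add_self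
        rw [ih z.2 (this.trans ha), mul_zero]
    rw [contract, hF, support_monomial, if_neg one_ne_zero]
    refine Finset.sum_eq_zero fun a ha => ?_
    rw [Finset.sum_singleton]
    split_ifs with h
    · rw [key a h, zero_mul, monomial_zero]
    · rfl
  · ext p
    simp only [Set.mem_setOf_eq, map_sub, map_pow, map_mul, eval_X, sub_eq_zero]
    constructor
    · rintro ⟨h1, h2⟩
      have h1' : p 1 = p 0 ∨ p 1 = -p 0 := by
        have : (p 1 - p 0) * (p 1 + p 0) = 0 := by linear_combination -h1
        rcases mul_eq_zero.1 this with h | h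
        · left; exact sub_eq_zero.1 h
        · right; linear_combination h
      obtain ⟨ε₁, hε₁, hp1⟩ : ∃ ε₁ : ℂ, (ε₁ = 1 ∨ ε₁ = -1) ∧ p 1 = ε₁ * p 0 := by
        rcases h1' with h | h
        · exact ⟨1, Or.inl rfl, by rw [h, one_mul]⟩
        · exact ⟨-1, Or.inr rfl, by rw [h]; ring⟩
      have h2' : p 2 ^ 2 = p 0 ^ 2 * p 3 ^ 2 := by rw [h2, ← h1]
      by_cases h0 : p 0 = 0
      · have hp2 : p 2 = 0 := by
          have : p 2 ^ 2 = 0 := by rw [h2', h0]; ring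
          exact pow_eq_zero_iff (n := 2) (by norm_num) |>.1 this
        refine ⟨p 0, p 3, ε₁, 1, hε₁, Or.inl rfl, ?_⟩
        funext i
        fin_cases i <;> simp [hp1, hp2, h0]
      · set s := p 2 / p 0 with hs
        have hp2 : p 2 = p 0 * s := by rw [hs]; field_simp
        have h3' : p 3 = s ∨ p 3 = -s := by
          have hsq : p 3 ^ 2 = s ^ 2 := by
            have h2'' := h2'
            rw [hp2] at h2''
            have h02 : p 0 ^ 2 ≠ 0 := pow_ne_zero _ h0
            apply mul_left_cancel₀ h02
            linear_combination -h2''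
          have : (p 3 - s) * (p 3 + s) = 0 := by linear_combination hsq
          rcases mul_eq_zero.1 this with h | h
          · left; linear_combination h
          · right; linear_combination h
        obtain ⟨ε₂, hε₂, hp3⟩ : ∃ ε₂ : ℂ, (ε₂ = 1 ∨ ε₂ = -1) ∧ p 3 = ε₂ * s := by
          rcases h3' with h | h
          · exact ⟨1, Or.inl rfl, by rw [h, one_mul]⟩
          · exact ⟨-1, Or.inr rfl, by rw [h]; ring⟩
        refine ⟨p 0, s, ε₁, ε₂, hε₁, hε₂, ?_⟩
        funext i
        fin_cases i <;> simp [hp1, hp2, hp3]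
    · rintro ⟨t, s, ε₁, ε₂, hε₁, hε₂, rfl⟩
      simp only [Matrix.cons_val_zero, Matrix.cons_val_one, Matrix.head_cons,
        Matrix.cons_val_two, Matrix.tail_cons, Matrix.cons_val_three]
      rcases hε₁ with rfl | rfl <;> rcases hε₂ with rfl | rfl <;> constructor <;> ring
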